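/- Let φ be a positive DNF over independent Bernoulli variables and let φ' be any dissociation of φ, i.e., a positive DNF over a variable set X' together with a surjective substitution θ: X' → X such that φ'(θ(X')) = φ(X), where each variable x' ∈ X' is an independent Bernoulli variable with probability P[x'] = P[θ(x')]. Then P[φ'] ≥ P[φ]. -/
import Mathlib


open Finset

/-- The probability of a positive DNF with set of terms `T` over independent Bernoulli
variables with probabilities `p`, computed by inclusion-exclusion. -/
noncomputable def dnfProb {ι : Type*} [DecidableEq ι] (T : Finset (Finset ι))
    (p : ι → ℝ) : ℝ :=
  ∑ S ∈ T.powerset.erase ∅, (-1 : ℝ) ^ (S.card + 1) * ∏ i ∈ S.sup id, p i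

namespace DnfAux

variable {κ : Type*} [DecidableEq κ]

/-- The weight of the assignment setting exactly the variables in `W ⊆ V` to true. -/
noncomputable def wt (V : Finset κ) (q : κ → ℝ) (W : Finset κ) : ℝ :=
  (∏ y ∈ W, q y) * ∏ y ∈ V \ W, (1 - q y)

lemma wt_nonneg {V : Finset κ} {q : κ → ℝ} (hq : ∀ y, 0 ≤ q y ∧ q y ≤ 1) (W : Finset κ) :
    0 ≤ wt V q W :=
  mul_nonneg (prod_nonneg fun y _ => (hq y).1)
    (prod_nonneg fun y _ => by linarith [(hq y).2])

lemma sum_wt (V : Finset κ) (q : κ → ℝ) : ∑ W ∈ V.powerset, wt V q W = 1 := by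
  have h := Finset.prod_add q (fun y => 1 - q y) V
  simp only [add_sub_cancel, Finset.prod_const_one] at h
  simpa [wt] using h.symm

lemma sum_wt_cond (V U : Finset κ) (q : κ → ℝ) (hU : U ⊆ V) :
    ∑ W ∈ V.powerset, wt V q W * (if U ⊆ W then 1 else 0) = ∏ y ∈ U, q y := by
  classical
  rw [Finset.sum_congr rfl (fun W _ => mul_boole (U ⊆ W) (wt V q W)), ← Finset.sum_filter]
  have key : ∑ W ∈ (V.powerset.filter (fun W => U ⊆ W)), wt V q W
      = ∑ W' ∈ (V \ U).powerset, (∏ y ∈ U, q y) * wt (V \ U) q W' := by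
    refine Finset.sum_nbij' (fun W => W \ U) (fun W' => W' ∪ U) ?_ ?_ ?_ ?_ ?_
    · intro W hW
      simp only [mem_filter, mem_powerset] at hW
      exact mem_powerset.2 (sdiff_subset_sdiff hW.1 subset_rfl)
    · intro W' hW'
      simp only [mem_powerset] at hW'
      refine mem_filter.2 ⟨mem_powerset.2 ?_, subset_union_right⟩
      exact union_subset (hW'.trans sdiff_subset) hU
    · intro W hW
      simp only [mem_filter, mem_powerset] at hW
      exact sdiff_union_of_subset hW.2
    · intro W' hW'
      simp only [mem_powerset] at hW'
      have : Disjoint W' U := disjoint_sdiff_self_left.mono_left hW'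
      exact union_sdiff_cancel_right this
    · intro W hW
      simp only [mem_filter, mem_powerset] at hW
      unfold wt
      have h1 : ∏ y ∈ W, q y = (∏ y ∈ U, q y) * ∏ y ∈ W \ U, q y := by
        rw [mul_comm, Finset.prod_sdiff hW.2]
      have h2 : V \ W = (V \ U) \ (W \ U) := by
        ext y
        simp only [mem_sdiff]
        constructor
        · rintro ⟨hyV, hyW⟩
          exact ⟨⟨hyV, fun hyU => hyW (hW.2 hyU)⟩, fun h => hyW h.1⟩
        · rintro ⟨⟨hyV, hyU⟩, h⟩
          refine ⟨hyV, fun hyW => h ⟨hyW, hyU⟩⟩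
      rw [h1, h2]
      ring
  rw [key, ← Finset.mul_sum, sum_wt, mul_one]


lemma sum_sign (T : Finset (Finset κ)) (W : Finset κ) :
    ∑ S ∈ T.powerset.erase ∅, (-1:ℝ)^(S.card+1) * (if S.sup id ⊆ W then 1 else 0)
      = if ∃ c ∈ T, c ⊆ W then 1 else 0 := by
  classical
  set A := T.filter (fun c => c ⊆ W) with hA
  have hiff : ∀ S ∈ T.powerset.erase ∅, (S.sup id ⊆ W ↔ S ⊆ A) := by
    intro S hS
    obtain ⟨-, hS2⟩ := mem_erase.1 hS
    rw [mem_powerset] at hS2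
    constructor
    · intro h c hc
      exact mem_filter.2 ⟨hS2 hc, le_trans (Finset.le_sup (f := id) hc) h⟩
    · intro h
      exact Finset.sup_le fun c hc => (mem_filter.1 (h hc)).2
  have hsub : A.powerset.erase ∅ ⊆ T.powerset.erase ∅ := by
    intro S hS
    obtain ⟨h1, h2⟩ := mem_erase.1 hS
    exact mem_erase.2 ⟨h1, mem_powerset.2 ((mem_powerset.1 h2).trans (filter_subset _ _))⟩
  have step1 : ∑ S ∈ T.powerset.erase ∅, (-1:ℝ)^(S.card+1) * (if S.sup id ⊆ W then 1 else 0)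
      = ∑ S ∈ A.powerset.erase ∅, (-1:ℝ)^(S.card+1) := by
    rw [← Finset.sum_subset hsub]
    · refine Finset.sum_congr rfl fun S hS => ?_
      rw [if_pos ((hiff S (hsub hS)).2 (mem_powerset.1 (mem_erase.1 hS).2)), mul_one]
    · intro S hS hS'
      rw [if_neg, mul_zero]
      intro hcon
      have : S ⊆ A := (hiff S hS).1 hcon
      exact hS' (mem_erase.2 ⟨(mem_erase.1 hS).1, mem_powerset.2 this⟩)
  have step2 : ∑ S ∈ A.powerset.erase ∅, (-1:ℝ)^(S.card+1)
      = 1 - (if A = ∅ then 1 else 0) := by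
    by_cases hAe : A = ∅
    · rw [hAe]; simp
    · rw [if_neg hAe, sub_zero]
      have hne : A.Nonempty := nonempty_iff_ne_empty.2 hAe
      have hcast : ∑ S ∈ A.powerset, (-1:ℝ)^(S.card) = 0 := by
        have h := Finset.sum_powerset_neg_one_pow_card_of_nonempty hne
        exact_mod_cast congrArg (fun n : ℤ => (n:ℝ)) h
      have h0 : (∅ : Finset (Finset κ)) ∈ A.powerset := mem_powerset.2 (empty_subset _)
      have hsum := Finset.add_sum_erase _ (fun S => (-1:ℝ)^(S.card+1)) h0
      have hneg : ∑ S ∈ A.powerset, (-1:ℝ)^(S.card+1)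
          = - ∑ S ∈ A.powerset, (-1:ℝ)^(S.card) := by
        rw [← Finset.sum_neg_distrib]
        exact Finset.sum_congr rfl fun S _ => by ring
      rw [hneg, hcast] at hsum
      simp only [Finset.card_empty, zero_add, pow_one, neg_zero] at hsum
      linarith
  rw [step1, step2]
  by_cases h : ∃ c ∈ T, c ⊆ W
  · rw [if_pos h, if_neg, sub_zero]
    obtain ⟨c, hc, hcW⟩ := h
    exact Finset.ne_empty_of_mem (mem_filter.2 ⟨hc, hcW⟩)
  · rw [if_neg h, if_pos, sub_self]
    rw [hA, Finset.filter_eq_empty_iff]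
    intro c hc hcW
    exact h ⟨c, hc, hcW⟩


lemma dnfProb_eq_sum (T : Finset (Finset κ)) (q : κ → ℝ) (V : Finset κ)
    (hV : T.sup id ⊆ V) :
    dnfProb T q = ∑ W ∈ V.powerset, wt V q W * (if ∃ c ∈ T, c ⊆ W then 1 else 0) := by
  classical
  unfold dnfProb
  have key : ∀ S ∈ T.powerset.erase ∅,
      (-1:ℝ)^(S.card+1) * ∏ i ∈ S.sup id, q i
        = ∑ W ∈ V.powerset, (-1:ℝ)^(S.card+1) * (wt V q W * (if S.sup id ⊆ W then 1 else 0)) := by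
    intro S hS
    have hSV : S.sup id ⊆ V := by
      obtain ⟨-, hS2⟩ := mem_erase.1 hS
      exact le_trans (Finset.sup_mono (mem_powerset.1 hS2)) hV
    rw [← Finset.mul_sum, sum_wt_cond V _ q hSV]
  rw [Finset.sum_congr rfl key, Finset.sum_comm]
  refine Finset.sum_congr rfl fun W hW => ?_
  rw [← sum_sign T W, Finset.mul_sum]
  exact Finset.sum_congr rfl fun S hS => by ring

lemma sup_image_eq {ι ι' : Type*} [DecidableEq ι] [DecidableEq ι'] (f : ι → ι')
    (S : Finset (Finset ι)) :
    (S.image (Finset.image f)).sup id = (S.sup id).image f := by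
  induction S using Finset.induction_on with
  | empty => simp
  | insert h ih => simp [Finset.sup_insert, Finset.image_union, *]

lemma dnfProb_relabel {ι ι' : Type*} [DecidableEq ι] [DecidableEq ι'] (T : Finset (Finset ι))
    (p : ι → ℝ) (q : ι' → ℝ) (f : ι → ι') (hf : Function.Injective f)
    (hq : ∀ i, q (f i) = p i) :
    dnfProb (T.image (Finset.image f)) q = dnfProb T p := by
  classical
  unfold dnfProb
  refine (Finset.sum_bij (fun S _ => S.image (Finset.image f)) ?_ ?_ ?_ ?_).symm
  · intro S hS
    obtain ⟨h1, h2⟩ := mem_erase.1 hS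
    refine mem_erase.2 ⟨?_, mem_powerset.2 (Finset.image_subset_image (mem_powerset.1 h2))⟩
    simp only [ne_eq, Finset.image_eq_empty]
    exact h1
  · intro S1 h1 S2 h2 heq
    exact Finset.image_injective (Finset.image_injective hf) heq
  · intro S' hS'
    obtain ⟨h1, h2⟩ := mem_erase.1 hS'
    rw [mem_powerset] at h2
    have himg : (T.filter (fun c => c.image f ∈ S')).image (Finset.image f) = S' := by
      apply Finset.Subset.antisymm
      · intro c' hc'
        obtain ⟨c, hc, rfl⟩ := Finset.mem_image.1 hc'
        exact (mem_filter.1 hc).2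
      · intro c' hc'
        obtain ⟨c, hc, rfl⟩ := Finset.mem_image.1 (h2 hc')
        exact Finset.mem_image.2 ⟨c, mem_filter.2 ⟨hc, hc'⟩, rfl⟩
    have hne : T.filter (fun c => c.image f ∈ S') ≠ ∅ := by
      intro hcon
      rw [hcon, Finset.image_empty] at himg
      exact h1 himg.symm
    exact ⟨_, mem_erase.2 ⟨hne, mem_powerset.2 (filter_subset _ _)⟩, himg⟩
  · intro S hS
    congr 1
    · rw [Finset.card_image_of_injective _ (Finset.image_injective hf)]
    · rw [sup_image_eq, Finset.prod_image (fun x _ y _ h => hf h)]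
      exact Finset.prod_congr rfl fun i _ => (hq i).symm

lemma sum_powerset_split (A B : Finset κ) (hAB : Disjoint A B) (f : Finset κ → ℝ) :
    ∑ W ∈ (A ∪ B).powerset, f W
      = ∑ Wa ∈ A.powerset, ∑ Wb ∈ B.powerset, f (Wa ∪ Wb) := by
  classical
  rw [← Finset.sum_product']
  refine Finset.sum_nbij' (fun W => (W ∩ A, W ∩ B)) (fun P => P.1 ∪ P.2) ?_ ?_ ?_ ?_ ?_
  · intro W hW
    exact Finset.mem_product.2 ⟨mem_powerset.2 inter_subset_right,
      mem_powerset.2 inter_subset_right⟩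
  · intro P hP
    obtain ⟨h1, h2⟩ := Finset.mem_product.1 hP
    exact mem_powerset.2 (union_subset_union (mem_powerset.1 h1) (mem_powerset.1 h2))
  · intro W hW
    have h := mem_powerset.1 hW
    ext y
    simp only [Finset.mem_union, Finset.mem_inter]
    constructor
    · rintro (⟨h1, -⟩ | ⟨h1, -⟩) <;> exact h1
    · intro hy
      rcases Finset.mem_union.1 (h hy) with h' | h'
      · exact Or.inl ⟨hy, h'⟩
      · exact Or.inr ⟨hy, h'⟩
  · intro P hP
    obtain ⟨h1, h2⟩ := Finset.mem_product.1 hP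
    rw [mem_powerset] at h1 h2
    have e1 : (P.1 ∪ P.2) ∩ A = P.1 := by
      ext y
      simp only [Finset.mem_inter, Finset.mem_union]
      constructor
      · rintro ⟨h' | h', hA⟩
        · exact h'
        · exact absurd hA (Finset.disjoint_right.1 hAB (h2 h'))
      · intro hy
        exact ⟨Or.inl hy, h1 hy⟩
    have e2 : (P.1 ∪ P.2) ∩ B = P.2 := by
      ext y
      simp only [Finset.mem_inter, Finset.mem_union]
      constructor
      · rintro ⟨h' | h', hB⟩
        · exact absurd hB (Finset.disjoint_left.1 hAB (h1 h'))
        · exact h'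
      · intro hy
        exact ⟨Or.inr hy, h2 hy⟩
    beta_reduce
    rw [e1, e2]
  · intro W hW
    congr 1
    have h := mem_powerset.1 hW
    ext y
    simp only [Finset.mem_union, Finset.mem_inter]
    constructor
    · intro hy
      rcases Finset.mem_union.1 (h hy) with h' | h'
      · exact Or.inl ⟨hy, h'⟩
      · exact Or.inr ⟨hy, h'⟩
    · rintro (⟨h1, -⟩ | ⟨h1, -⟩) <;> exact h1

lemma wt_split (A B : Finset κ) (q : κ → ℝ) (hAB : Disjoint A B) {Wa Wb : Finset κ}
    (hWa : Wa ⊆ A) (hWb : Wb ⊆ B) :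
    wt (A ∪ B) q (Wa ∪ Wb) = wt A q Wa * wt B q Wb := by
  unfold wt
  have hd : Disjoint Wa Wb := hAB.mono hWa hWb
  have hd2 : Disjoint (A \ Wa) (B \ Wb) := hAB.mono sdiff_subset sdiff_subset
  have e : (A ∪ B) \ (Wa ∪ Wb) = (A \ Wa) ∪ (B \ Wb) := by
    ext y
    simp only [Finset.mem_sdiff, Finset.mem_union]
    constructor
    · rintro ⟨hA | hB, hy⟩
      · exact Or.inl ⟨hA, fun h => hy (Or.inl h)⟩
      · exact Or.inr ⟨hB, fun h => hy (Or.inr h)⟩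
    · rintro (⟨h1, h2⟩ | ⟨h1, h2⟩)
      · refine ⟨Or.inl h1, ?_⟩
        rintro (h | h)
        · exact h2 h
        · exact absurd h1 (Finset.disjoint_right.1 hAB (hWb h))
      · refine ⟨Or.inr h1, ?_⟩
        rintro (h | h)
        · exact absurd h1 (Finset.disjoint_left.1 hAB (hWa h))
        · exact h2 h
  rw [e, Finset.prod_union hd, Finset.prod_union hd2]
  ring


/-- Key lemma: merging all copies (the fiber of `g` at `v`) of a variable into `v`
can only decrease the DNF probability, provided each term contains at most one copy. -/
lemma merge_le (T : Finset (Finset κ)) (q : κ → ℝ)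
    (hq : ∀ y, 0 ≤ q y ∧ q y ≤ 1) (g : κ → κ) (v : κ)
    (hgv : g v = v)
    (hg : ∀ y, g y = v ∨ g y = y)
    (hq' : ∀ y, g y = v → q y = q v)
    (hone : ∀ c ∈ T, ∀ y ∈ c, ∀ z ∈ c, g y = v → g z = v → y = z) :
    dnfProb (T.image (Finset.image g)) q ≤ dnfProb T q := by
  classical
  set V : Finset κ := insert v (T.sup id) with hVdef
  have hvV : v ∈ V := mem_insert_self _ _
  have hTV : T.sup id ⊆ V := subset_insert _ _
  have hcV : ∀ c ∈ T, c ⊆ V := fun c hc => le_trans (Finset.le_sup (f := id) hc) hTV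
  have hT'V : (T.image (Finset.image g)).sup id ⊆ V := by
    rw [sup_image_eq]
    intro y hy
    obtain ⟨z, hz, rfl⟩ := Finset.mem_image.1 hy
    rcases hg z with h | h
    · rw [h]; exact hvV
    · rw [h]; exact hTV hz
  set F := V.filter (fun y => g y = v) with hFdef
  set V₀ := V.filter (fun y => ¬ g y = v) with hV0def
  have hvF : v ∈ F := mem_filter.2 ⟨hvV, hgv⟩
  have hdisj : Disjoint V₀ F :=
    (Finset.disjoint_filter_filter_not V V (fun y => g y = v)).symm
  have hunion : V₀ ∪ F = V := by
    rw [union_comm]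
    exact Finset.filter_union_filter_not_eq _ V
  have hWbF : ∀ {Wb : Finset κ}, Wb ⊆ F → ∀ y ∈ Wb, g y = v :=
    fun {Wb} hWb y hy => (mem_filter.1 (hWb hy)).2
  have hWaV : ∀ {Wa : Finset κ}, Wa ⊆ V₀ → ∀ y ∈ Wa, ¬ g y = v :=
    fun {Wa} hWa y hy => (mem_filter.1 (hWa hy)).2
  have hsingle_sum : ∀ y ∈ F, ∑ Wb ∈ F.powerset, wt F q Wb * (if y ∈ Wb then 1 else 0)
      = q y := by
    intro y hy
    have h := sum_wt_cond F {y} q (singleton_subset_iff.2 hy)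
    simpa [singleton_subset_iff] using h
  rw [dnfProb_eq_sum T q V hTV, dnfProb_eq_sum _ q V hT'V, ← hunion,
      sum_powerset_split _ _ hdisj, sum_powerset_split _ _ hdisj]
  refine Finset.sum_le_sum fun Wa hWa => ?_
  have hWa' : Wa ⊆ V₀ := mem_powerset.1 hWa
  -- the two propositions governing the case analysis
  set PA : Prop := ∃ c ∈ T, (∀ y ∈ c, ¬ g y = v) ∧ c ⊆ Wa with hPAdef
  set PB : Prop := ∃ c ∈ T, (∀ y ∈ c, ¬ g y = v → y ∈ Wa) ∧ ∃ y ∈ c, g y = v with hPBdef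
  -- characterization of the merged indicator
  have hMB : ∀ Wb ⊆ F, ((∃ c ∈ T.image (Finset.image g), c ⊆ Wa ∪ Wb)
      ↔ (PA ∨ (PB ∧ v ∈ Wb))) := by
    intro Wb hWb
    constructor
    · rintro ⟨c', hc', hsub⟩
      obtain ⟨c, hcT, rfl⟩ := Finset.mem_image.1 hc'
      have hel : ∀ y ∈ c, g y ∈ Wa ∪ Wb := fun y hy =>
        hsub (Finset.mem_image.2 ⟨y, hy, rfl⟩)
      have hWanotv : ∀ y ∈ c, ¬ g y = v → y ∈ Wa := by
        intro y hy hyv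
        have hgy : g y = y := (hg y).resolve_left hyv
        rcases Finset.mem_union.1 (hel y hy) with h | h
        · rwa [hgy] at h
        · rw [hgy] at h
          exact absurd (hWbF hWb y h) hyv
      by_cases hc : ∀ y ∈ c, ¬ g y = v
      · exact Or.inl ⟨c, hcT, hc, fun y hy => hWanotv y hy (hc y hy)⟩
      · push_neg at hc
        obtain ⟨y₀, hy₀c, hy₀v⟩ := hc
        refine Or.inr ⟨⟨c, hcT, hWanotv, y₀, hy₀c, hy₀v⟩, ?_⟩
        have := hel y₀ hy₀c
        rw [hy₀v] at this
        rcases Finset.mem_union.1 this with h | h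
        · exact absurd hgv (hWaV hWa' v h)
        · exact h
    · rintro (⟨c, hcT, hcv, hcWa⟩ | ⟨⟨c, hcT, hcWa, y₀, hy₀c, hy₀v⟩, hvWb⟩)
      · refine ⟨c.image g, Finset.mem_image.2 ⟨c, hcT, rfl⟩, ?_⟩
        intro y' hy'
        obtain ⟨y, hy, rfl⟩ := Finset.mem_image.1 hy'
        have hgy : g y = y := (hg y).resolve_left (hcv y hy)
        rw [hgy]
        exact Finset.mem_union.2 (Or.inl (hcWa hy))
      · refine ⟨c.image g, Finset.mem_image.2 ⟨c, hcT, rfl⟩, ?_⟩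
        intro y' hy'
        obtain ⟨y, hy, rfl⟩ := Finset.mem_image.1 hy'
        by_cases hyv : g y = v
        · rw [hyv]
          exact Finset.mem_union.2 (Or.inr hvWb)
        · have hgy : g y = y := (hg y).resolve_left hyv
          rw [hgy]
          exact Finset.mem_union.2 (Or.inl (hcWa y hy hyv))
  have hwtF : ∀ Wb ∈ F.powerset, (0:ℝ) ≤ wt F q Wb := fun Wb _ => wt_nonneg hq Wb
  -- the inner inequality, for fixed Wa
  have key : ∑ Wb ∈ F.powerset,
        wt F q Wb * (if ∃ c ∈ T.image (Finset.image g), c ⊆ Wa ∪ Wb then 1 else 0)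
      ≤ ∑ Wb ∈ F.powerset, wt F q Wb * (if ∃ c ∈ T, c ⊆ Wa ∪ Wb then 1 else 0) := by
    by_cases hPA : PA
    · refine Finset.sum_le_sum fun Wb hWb => ?_
      obtain ⟨c, hcT, -, hcWa⟩ := hPA
      have hO : (if ∃ c ∈ T, c ⊆ Wa ∪ Wb then (1:ℝ) else 0) = 1 :=
        if_pos ⟨c, hcT, hcWa.trans subset_union_left⟩
      rw [hO]
      refine mul_le_mul_of_nonneg_left ?_ (hwtF Wb hWb)
      split_ifs <;> norm_num
    · by_cases hPB : PB
      · obtain ⟨c₀, hc₀T, hc₀a, y₀, hy₀c, hy₀v⟩ := hPB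
        have hy₀F : y₀ ∈ F := mem_filter.2 ⟨hcV _ hc₀T hy₀c, hy₀v⟩
        have hLHS : ∑ Wb ∈ F.powerset,
            wt F q Wb * (if ∃ c ∈ T.image (Finset.image g), c ⊆ Wa ∪ Wb then 1 else 0)
            = q v := by
          rw [Finset.sum_congr rfl (fun Wb hWb => ?_), hsingle_sum v hvF]
          congr 1
          have h := hMB Wb (mem_powerset.1 hWb)
          by_cases hv : v ∈ Wb
          · rw [if_pos hv, if_pos (h.2 (Or.inr ⟨⟨c₀, hc₀T, hc₀a, y₀, hy₀c, hy₀v⟩, hv⟩))]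
          · rw [if_neg hv, if_neg]
            intro hcon
            rcases h.1 hcon with h' | h'
            · exact hPA h'
            · exact hv h'.2
        rw [hLHS, ← hq' y₀ hy₀v, ← hsingle_sum y₀ hy₀F]
        refine Finset.sum_le_sum fun Wb hWb => ?_
        by_cases hy : y₀ ∈ Wb
        · rw [if_pos hy]
          have hsub : c₀ ⊆ Wa ∪ Wb := by
            intro z hz
            by_cases hzv : g z = v
            · have : z = y₀ := hone c₀ hc₀T z hz y₀ hy₀c hzv hy₀v
              rw [this]
              exact Finset.mem_union.2 (Or.inr hy)
            · exact Finset.mem_union.2 (Or.inl (hc₀a z hz hzv))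
          rw [if_pos ⟨c₀, hc₀T, hsub⟩]
        · rw [if_neg hy, mul_zero]
          refine mul_nonneg (hwtF Wb hWb) ?_
          split_ifs <;> norm_num
      · refine Finset.sum_le_sum fun Wb hWb => ?_
        rw [if_neg, mul_zero]
        · refine mul_nonneg (hwtF Wb hWb) ?_
          split_ifs <;> norm_num
        · intro hcon
          rcases (hMB Wb (mem_powerset.1 hWb)).1 hcon with h' | h'
          · exact hPA h'
          · exact hPB h'.1
  have eM : ∑ Wb ∈ F.powerset, wt (V₀ ∪ F) q (Wa ∪ Wb)
        * (if ∃ c ∈ T.image (Finset.image g), c ⊆ Wa ∪ Wb then 1 else 0)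
      = wt V₀ q Wa * ∑ Wb ∈ F.powerset,
        wt F q Wb * (if ∃ c ∈ T.image (Finset.image g), c ⊆ Wa ∪ Wb then 1 else 0) := by
    rw [Finset.mul_sum]
    refine Finset.sum_congr rfl fun Wb hWb => ?_
    rw [wt_split V₀ F q hdisj hWa' (mem_powerset.1 hWb)]
    ring
  have eO : ∑ Wb ∈ F.powerset, wt (V₀ ∪ F) q (Wa ∪ Wb)
        * (if ∃ c ∈ T, c ⊆ Wa ∪ Wb then 1 else 0)
      = wt V₀ q Wa * ∑ Wb ∈ F.powerset,
        wt F q Wb * (if ∃ c ∈ T, c ⊆ Wa ∪ Wb then 1 else 0) := by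
    rw [Finset.mul_sum]
    refine Finset.sum_congr rfl fun Wb hWb => ?_
    rw [wt_split V₀ F q hdisj hWa' (mem_powerset.1 hWb)]
    ring
  rw [eM, eO]
  exact mul_le_mul_of_nonneg_left key (wt_nonneg hq Wa)


end DnfAux

/-- Any dissociation `φ'` (terms `T'` over variables `ι'`, with a surjective
substitution `θ : ι' → ι` that is injective on each term and maps the terms of `φ'` onto the
terms of `φ`, each copy inheriting the probability of its original) of a positive DNF `φ`
(terms `T`) satisfies `P[φ'] ≥ P[φ]`. -/
theorem dnf_dissociation_upper_bound {ι ι' : Type*} [DecidableEq ι] [DecidableEq ι']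
    (T : Finset (Finset ι)) (T' : Finset (Finset ι'))
    (p : ι → ℝ) (p' : ι' → ℝ) (hp : ∀ i, 0 ≤ p i ∧ p i ≤ 1)
    (θ : ι' → ι) (hθ : Function.Surjective θ)
    (hinj : ∀ c' ∈ T', Set.InjOn θ ↑c')
    (hmap : T'.image (Finset.image θ) = T)
    (hprob : ∀ x', p' x' = p (θ x')) :
    dnfProb T p ≤ dnfProb T' p' := by
  classical
  obtain ⟨s, hs⟩ := hθ.hasRightInverse
  have hsinj : Function.Injective s := hs.injective
  set ρ : Finset ι → ι' → ι' := fun M x' => if θ x' ∈ M then s (θ x') else x' with hρ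
  have hq : ∀ y, 0 ≤ p' y ∧ p' y ≤ 1 := fun y => by rw [hprob]; exact hp (θ y)
  have main : ∀ M : Finset ι,
      dnfProb (T'.image (Finset.image (ρ M))) p' ≤ dnfProb T' p' := by
    intro M
    induction M using Finset.induction_on with
    | empty =>
        have h1 : T'.image (Finset.image (ρ ∅)) = T' := by
          have hid : ∀ c' : Finset ι', c'.image (ρ ∅) = c' := by
            intro c'
            have : ρ ∅ = id := by funext x'; simp [hρ]
            rw [this, Finset.image_id]
          calc T'.image (Finset.image (ρ ∅)) = T'.image id :=
                Finset.image_congr (fun c' _ => hid c')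
            _ = T' := Finset.image_id
        rw [h1]
    | @insert i M hiM ih =>
        set g : ι' → ι' := fun y => if θ y = i then s i else y with hgdef
        have hcomp : ∀ x', ρ (insert i M) x' = g (ρ M x') := by
          intro x'
          by_cases h1 : θ x' ∈ M
          · have h2 : θ x' ∈ insert i M := mem_insert_of_mem h1
            have hne : ¬ θ (s (θ x')) = i := by
              rw [hs (θ x')]
              intro hcon
              exact hiM (hcon ▸ h1)
            simp only [hρ, hgdef, if_pos h1, if_pos h2, if_neg hne]
          · by_cases h3 : θ x' = i
            · simp only [hρ, hgdef, if_neg h1, if_pos (mem_insert.2 (Or.inl h3)),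
                if_pos h3, h3]
            · have h4 : θ x' ∉ insert i M := by
                rw [mem_insert]
                rintro (h | h)
                · exact h3 h
                · exact h1 h
              simp only [hρ, hgdef, if_neg h1, if_neg h4, if_neg h3]
        have himg : T'.image (Finset.image (ρ (insert i M)))
            = (T'.image (Finset.image (ρ M))).image (Finset.image g) := by
          rw [Finset.image_image]
          apply Finset.image_congr
          intro c' _
          simp only [Function.comp_apply]
          rw [Finset.image_image]
          exact Finset.image_congr fun x' _ => hcomp x'
        rw [himg]
        refine le_trans (DnfAux.merge_le _ p' hq g (s i) ?_ ?_ ?_ ?_) ih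
        · simp [hgdef, hs i]
        · intro y
          by_cases h : θ y = i
          · exact Or.inl (by simp only [hgdef, if_pos h])
          · exact Or.inr (by simp only [hgdef, if_neg h])
        · intro y hy
          by_cases h : θ y = i
          · rw [hprob, hprob, h, hs i]
          · simp only [hgdef, if_neg h] at hy
            rw [hy]
        · intro c hc y hyc z hzc hyv hzv
          obtain ⟨c', hc'T, rfl⟩ := Finset.mem_image.1 hc
          obtain ⟨a, hac, rfl⟩ := Finset.mem_image.1 hyc
          obtain ⟨b, hbc, rfl⟩ := Finset.mem_image.1 hzc
          have key : ∀ x' ∈ c', g (ρ M x') = s i → (ρ M x' = x' ∧ θ x' = i) := by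
            intro x' hx' hgx
            by_cases h1 : θ x' ∈ M
            · exfalso
              have hρx : ρ M x' = s (θ x') := if_pos h1
              have hθρ : θ (ρ M x') = θ x' := by rw [hρx, hs]
              by_cases h2 : θ (ρ M x') = i
              · rw [hθρ] at h2
                exact hiM (h2 ▸ h1)
              · simp only [hgdef, if_neg h2] at hgx
                have : θ (ρ M x') = i := by rw [hgx, hs]
                exact h2 this
            · have hρx : ρ M x' = x' := if_neg h1
              rw [hρx] at hgx ⊢
              by_cases h2 : θ x' = i
              · exact ⟨rfl, h2⟩
              · exfalso
                simp only [hgdef, if_neg h2] at hgx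
                have : θ x' = i := by rw [hgx, hs]
                exact h2 this
          obtain ⟨ha1, ha2⟩ := key a hac hyv
          obtain ⟨hb1, hb2⟩ := key b hbc hzv
          rw [ha1, hb1]
          exact hinj c' hc'T (Finset.mem_coe.2 hac) (Finset.mem_coe.2 hbc)
            (ha2.trans hb2.symm)
  set R : Finset ι := (T'.sup id).image θ with hR
  have hfinal : T'.image (Finset.image (ρ R)) = T.image (Finset.image s) := by
    rw [← hmap, Finset.image_image]
    apply Finset.image_congr
    intro c' hc'
    simp only [Function.comp_apply]
    rw [Finset.image_image]
    apply Finset.image_congr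
    intro x' hx'
    have hx'V : x' ∈ T'.sup id :=
      Finset.le_sup (f := id) (Finset.mem_coe.1 hc') hx'
    have hmem : θ x' ∈ R := Finset.mem_image.2 ⟨x', hx'V, rfl⟩
    simp only [hρ, Function.comp_apply, if_pos hmem]
  have heq : dnfProb (T'.image (Finset.image (ρ R))) p' = dnfProb T p := by
    rw [hfinal]
    exact DnfAux.dnfProb_relabel T p p' s hsinj (fun i => by rw [hprob, hs])
  calc dnfProb T p = dnfProb (T'.image (Finset.image (ρ R))) p' := heq.symm
    _ ≤ dnfProb T' p' := main R
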